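/- Let λ₁, λ₂ be coprime positive integers, m a positive integer, S = {0, λ₁, λ₁+λ₂} and S' = {0, mλ₁, m(λ₁+λ₂)}. Then d_c(S') = d_c(S) and d_p(S') = d_p(S). -/

import Mathlib

open Filter Set

/-- The translateSet `S + t` of a set of integers. -/
def translateSet (S : Set ℤ) (t : ℤ) : Set ℤ := (· + t) '' S

/-- Upper density of a set of integers. -/
noncomputable def upperDensity (A : Set ℤ) : ℝ :=
  Filter.limsup (fun n : ℕ => ((A ∩ Set.Icc (-(n : ℤ)) (n : ℤ)).ncard : ℝ) / (2 * n + 1)) Filter.atTop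

/-- Lower density of a set of integers. -/
noncomputable def lowerDensity (A : Set ℤ) : ℝ :=
  Filter.liminf (fun n : ℕ => ((A ∩ Set.Icc (-(n : ℤ)) (n : ℤ)).ncard : ℝ) / (2 * n + 1)) Filter.atTop

/-- `A` is `S`-covering: every integer lies in some translateSet `S + a`, `a ∈ A`. -/
def SCovering (S A : Set ℤ) : Prop := ∀ t : ℤ, ∃ a ∈ A, t ∈ translateSet S a

/-- `A` is `S`-blocking: `A` meets every translateSet of `S`. -/
def SBlocking (S A : Set ℤ) : Prop := ∀ t : ℤ, (A ∩ translateSet S t).Nonempty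

/-- `A` is `S`-free: `A` contains no translateSet of `S`. -/
def SFree (S A : Set ℤ) : Prop := ∀ t : ℤ, ¬ translateSet S t ⊆ A

/-- `A` is `S`-packing: distinct translates `S + a₁`, `S + a₂` with `a₁, a₂ ∈ A` are disjoint. -/
def SPacking (S A : Set ℤ) : Prop :=
  ∀ a₁ ∈ A, ∀ a₂ ∈ A, a₁ ≠ a₂ → Disjoint (translateSet S a₁) (translateSet S a₂)

/-- Maximum packing density of `S`. -/
noncomputable def dP (S : Set ℤ) : ℝ := sSup (upperDensity '' {A | SPacking S A})

/-- Minimum covering density of `S`. -/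
noncomputable def dC (S : Set ℤ) : ℝ := sInf (lowerDensity '' {A | SCovering S A})

/-- Minimum blocking density of `S`. -/
noncomputable def dB (S : Set ℤ) : ℝ := sInf (lowerDensity '' {A | SBlocking S A})

/-- `d_f(S)`: supremum of upper densities of `S`-free sets. -/
noncomputable def dF (S : Set ℤ) : ℝ := sSup (upperDensity '' {A | SFree S A})

/-- `d_f(S, -S)`: supremum of upper densities of sets free of translates of both `S` and `-S`. -/
noncomputable def dF2 (S : Set ℤ) : ℝ := sSup (upperDensity '' {A | SFree S A ∧ SFree (-S) A})


namespace Stmt17Aux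

/-- sequences with values in `[0,1]` -/
def In01 (u : ℕ → ℝ) : Prop := ∀ n, 0 ≤ u n ∧ u n ≤ 1

lemma In01.bddLe {u : ℕ → ℝ} (h : In01 u) : IsBoundedUnder (· ≤ ·) atTop u :=
  Filter.isBoundedUnder_of ⟨1, fun n => (h n).2⟩
lemma In01.bddGe {u : ℕ → ℝ} (h : In01 u) : IsBoundedUnder (· ≥ ·) atTop u :=
  Filter.isBoundedUnder_of ⟨0, fun n => (h n).1⟩
lemma In01.cobddLe {u : ℕ → ℝ} (h : In01 u) : IsCoboundedUnder (· ≤ ·) atTop u :=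
  h.bddGe.isCoboundedUnder_le
lemma In01.cobddGe {u : ℕ → ℝ} (h : In01 u) : IsCoboundedUnder (· ≥ ·) atTop u :=
  h.bddLe.isCoboundedUnder_ge

lemma In01.liminf_nonneg {u : ℕ → ℝ} (h : In01 u) : 0 ≤ liminf u atTop :=
  le_liminf_of_le h.cobddGe (Eventually.of_forall fun n => (h n).1)
lemma In01.limsup_le_one {u : ℕ → ℝ} (h : In01 u) : limsup u atTop ≤ 1 :=
  limsup_le_of_le h.cobddLe (Eventually.of_forall fun n => (h n).2)

/-- liminf comparison up to epsilon -/
lemma liminf_le_liminf_eps {u v : ℕ → ℝ} (hu : In01 u) (hv : In01 v)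
    (h : ∀ ε : ℝ, 0 < ε → ∀ᶠ n in atTop, u n ≤ v n + ε) :
    liminf u atTop ≤ liminf v atTop := by
  refine le_of_forall_pos_le_add fun ε hε => ?_
  calc liminf u atTop ≤ liminf (fun n => v n + ε) atTop := by
        refine liminf_le_liminf (h ε hε) hu.bddGe ?_
        exact IsBoundedUnder.isCoboundedUnder_ge <| Filter.isBoundedUnder_of
          ⟨1 + ε, fun n => by have := (hv n).2; show v n + ε ≤ 1 + ε; linarith⟩
    _ = liminf v atTop + ε := liminf_add_const atTop v ε hv.cobddGe hv.bddGe

lemma limsup_le_limsup_eps {u v : ℕ → ℝ} (hu : In01 u) (hv : In01 v)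
    (h : ∀ ε : ℝ, 0 < ε → ∀ᶠ n in atTop, u n ≤ v n + ε) :
    limsup u atTop ≤ limsup v atTop := by
  refine le_of_forall_pos_le_add fun ε hε => ?_
  calc limsup u atTop ≤ limsup (fun n => v n + ε) atTop := by
        refine limsup_le_limsup (h ε hε) hu.cobddLe ?_
        exact Filter.isBoundedUnder_of
          ⟨1 + ε, fun n => by have := (hv n).2; show v n + ε ≤ 1 + ε; linarith⟩
    _ = limsup v atTop + ε := limsup_add_const atTop v ε hv.bddLe hv.cobddLe

lemma liminf_comp_div_add (u : ℕ → ℝ) (M : ℕ) (hM : 0 < M) :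
    liminf (fun n => u (n / M + 1)) atTop = liminf u atTop := by
  have : (fun n => u (n / M + 1)) = u ∘ ((fun x => x + 1) ∘ (fun n => n / M)) := rfl
  rw [this, Filter.liminf_comp, ← Filter.map_map, Filter.map_div_atTop_eq_nat M hM,
    Filter.map_add_atTop_eq_nat 1]

lemma limsup_comp_div_add (u : ℕ → ℝ) (M : ℕ) (hM : 0 < M) :
    limsup (fun n => u (n / M + 1)) atTop = limsup u atTop := by
  have : (fun n => u (n / M + 1)) = u ∘ ((fun x => x + 1) ∘ (fun n => n / M)) := rfl
  rw [this, Filter.limsup_comp, ← Filter.map_map, Filter.map_div_atTop_eq_nat M hM,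
    Filter.map_add_atTop_eq_nat 1]

lemma liminf_comp_div_sub (u : ℕ → ℝ) (M : ℕ) (hM : 0 < M) :
    liminf (fun n => u (n / M - 1)) atTop = liminf u atTop := by
  have : (fun n => u (n / M - 1)) = u ∘ ((fun x => x - 1) ∘ (fun n => n / M)) := rfl
  rw [this, Filter.liminf_comp, ← Filter.map_map, Filter.map_div_atTop_eq_nat M hM,
    Filter.map_sub_atTop_eq_nat 1]

lemma limsup_comp_div_sub (u : ℕ → ℝ) (M : ℕ) (hM : 0 < M) :
    limsup (fun n => u (n / M - 1)) atTop = limsup u atTop := by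
  have : (fun n => u (n / M - 1)) = u ∘ ((fun x => x - 1) ∘ (fun n => n / M)) := rfl
  rw [this, Filter.limsup_comp, ← Filter.map_map, Filter.map_div_atTop_eq_nat M hM,
    Filter.map_sub_atTop_eq_nat 1]

lemma limsup_cmul {c : ℝ} (hc : 0 < c) {u : ℕ → ℝ} (hu : In01 u) :
    limsup (fun n => c * u n) atTop = c * limsup u atTop := by
  have h3 : IsBoundedUnder (· ≤ ·) atTop (fun n => c * u n) :=
    Filter.isBoundedUnder_of ⟨c, fun n => by
      have := (hu n).2; show c * u n ≤ c; nlinarith⟩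
  have h4 : IsCoboundedUnder (· ≤ ·) atTop (fun n => c * u n) :=
    IsBoundedUnder.isCoboundedUnder_le (Filter.isBoundedUnder_of ⟨0, fun n => by
      have := (hu n).1; show 0 ≤ c * u n; positivity⟩)
  exact ((OrderIso.mulLeft₀ c hc).limsup_apply hu.bddLe hu.cobddLe h3 h4).symm

lemma liminf_cmul {c : ℝ} (hc : 0 < c) {u : ℕ → ℝ} (hu : In01 u) :
    liminf (fun n => c * u n) atTop = c * liminf u atTop := by
  have h3 : IsBoundedUnder (· ≥ ·) atTop (fun n => c * u n) :=
    Filter.isBoundedUnder_of ⟨0, fun n => by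
      have := (hu n).1; show 0 ≤ c * u n; positivity⟩
  have h4 : IsCoboundedUnder (· ≥ ·) atTop (fun n => c * u n) :=
    IsBoundedUnder.isCoboundedUnder_ge (Filter.isBoundedUnder_of ⟨c, fun n => by
      have := (hu n).2; show c * u n ≤ c; nlinarith⟩)
  exact ((OrderIso.mulLeft₀ c hc).liminf_apply hu.bddGe hu.cobddGe h3 h4).symm

/-- finite-sum subadditivity of limsup for `[0,1]`-valued sequences -/
lemma limsup_sum_le (s : Finset ℕ) (f : ℕ → ℕ → ℝ) (hf : ∀ i ∈ s, In01 (f i)) :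
    limsup (fun n => ∑ i ∈ s, f i n) atTop ≤ ∑ i ∈ s, limsup (f i) atTop := by
  classical
  induction s using Finset.induction_on with
  | empty => simp
  | insert _ _ hnotmem ih =>
    rename_i a s
    have hfa := hf a (Finset.mem_insert_self a s)
    have hfs : ∀ i ∈ s, In01 (f i) := fun i hi => hf i (Finset.mem_insert_of_mem hi)
    have hbLe : IsBoundedUnder (· ≤ ·) atTop (fun n => ∑ i ∈ s, f i n) :=
      Filter.isBoundedUnder_of ⟨(s.card : ℝ), fun n => by
        calc ∑ i ∈ s, f i n ≤ ∑ _i ∈ s, (1:ℝ) :=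
              Finset.sum_le_sum fun i hi => (hfs i hi n).2
          _ = s.card := by simp⟩
    have hbGe : IsBoundedUnder (· ≥ ·) atTop (fun n => ∑ i ∈ s, f i n) :=
      Filter.isBoundedUnder_of ⟨0, fun n => Finset.sum_nonneg fun i hi => (hfs i hi n).1⟩
    calc limsup (fun n => ∑ i ∈ insert a s, f i n) atTop
        = limsup (fun n => f a n + ∑ i ∈ s, f i n) atTop := by
          congr 1; funext n; exact Finset.sum_insert hnotmem
      _ ≤ limsup (f a) atTop + limsup (fun n => ∑ i ∈ s, f i n) atTop := by
          have := limsup_add_le (f := atTop) (u := f a) (v := fun n => ∑ i ∈ s, f i n)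
            hfa.bddGe hfa.bddLe hbGe.isCoboundedUnder_le hbLe
          exact le_trans (le_of_eq (by congr)) this
      _ ≤ limsup (f a) atTop + ∑ i ∈ s, limsup (f i) atTop := by
          have := ih hfs; linarith
      _ = ∑ i ∈ insert a s, limsup (f i) atTop := by rw [Finset.sum_insert hnotmem]

lemma le_liminf_sum (s : Finset ℕ) (f : ℕ → ℕ → ℝ) (hf : ∀ i ∈ s, In01 (f i)) :
    ∑ i ∈ s, liminf (f i) atTop ≤ liminf (fun n => ∑ i ∈ s, f i n) atTop := by
  classical
  induction s using Finset.induction_on with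
  | empty => simp
  | insert _ _ hnotmem ih =>
    rename_i a s
    have hfa := hf a (Finset.mem_insert_self a s)
    have hfs : ∀ i ∈ s, In01 (f i) := fun i hi => hf i (Finset.mem_insert_of_mem hi)
    have hbLe : IsBoundedUnder (· ≤ ·) atTop (fun n => ∑ i ∈ s, f i n) :=
      Filter.isBoundedUnder_of ⟨(s.card : ℝ), fun n => by
        calc ∑ i ∈ s, f i n ≤ ∑ _i ∈ s, (1:ℝ) :=
              Finset.sum_le_sum fun i hi => (hfs i hi n).2
          _ = s.card := by simp⟩
    have hbGe : IsBoundedUnder (· ≥ ·) atTop (fun n => ∑ i ∈ s, f i n) :=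
      Filter.isBoundedUnder_of ⟨0, fun n => Finset.sum_nonneg fun i hi => (hfs i hi n).1⟩
    calc ∑ i ∈ insert a s, liminf (f i) atTop
        = liminf (f a) atTop + ∑ i ∈ s, liminf (f i) atTop := by rw [Finset.sum_insert hnotmem]
      _ ≤ liminf (f a) atTop + liminf (fun n => ∑ i ∈ s, f i n) atTop := by
          have := ih hfs; linarith
      _ ≤ liminf (fun n => f a n + ∑ i ∈ s, f i n) atTop := by
          have := le_liminf_add (f := atTop) (u := f a) (v := fun n => ∑ i ∈ s, f i n)
            hfa.bddGe hfa.bddLe hbGe hbLe.isCoboundedUnder_ge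
          exact le_trans this (le_of_eq (by congr))
      _ = liminf (fun n => ∑ i ∈ insert a s, f i n) atTop := by
          congr 1; funext n; rw [Finset.sum_insert hnotmem]


/-- slice map image -/
def sl (M r : ℕ) (A : Set ℤ) : Set ℤ := (fun x => (M : ℤ) * x + (r : ℤ)) '' A

lemma sl_inj (M : ℕ) (hM : 0 < M) (r : ℕ) :
    Function.Injective (fun x : ℤ => (M : ℤ) * x + (r : ℤ)) := by
  intro a b h
  simp only at h
  have h2 := add_right_cancel h
  have hMne : ((M : ℤ)) ≠ 0 := by exact_mod_cast hM.ne'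
  exact mul_left_cancel₀ hMne h2

lemma cnt_le_card (A : Set ℤ) (n : ℕ) : (A ∩ Icc (-(n:ℤ)) n).ncard ≤ 2*n+1 := by
  have h1 : (Set.Icc (-(n:ℤ)) n).ncard = 2*n+1 := by
    rw [← Finset.coe_Icc, Set.ncard_coe_finset, Int.card_Icc]; omega
  rw [← h1]
  exact Set.ncard_le_ncard inter_subset_right (Set.finite_Icc _ _)

lemma cnt_fin (A : Set ℤ) (n : ℕ) : (A ∩ Icc (-(n:ℤ)) n).Finite :=
  (Set.finite_Icc _ _).inter_of_right _

lemma slice_upper (M r : ℕ) (hM : 0 < M) (hr : r < M) (A : Set ℤ) (n : ℕ) :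
    (sl M r A ∩ Icc (-(n:ℤ)) n).ncard ≤
      (A ∩ Icc (-((n/M+1 : ℕ):ℤ)) ((n/M+1 : ℕ):ℤ)).ncard := by
  have hMZ : (0:ℤ) < M := by exact_mod_cast hM
  set k : ℤ := ((n / M : ℕ) : ℤ) with hk
  have hk0 : (M:ℤ) * k ≤ n := by
    have := Nat.div_mul_le_self n M
    rw [hk]; push_cast; nlinarith [this, (by exact_mod_cast this : ((n/M * M : ℕ):ℤ) ≤ (n:ℤ))]
  have hk1 : (n:ℤ) < (M:ℤ) * k + M := by
    have h := Nat.div_add_mod n M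
    have h2 : n % M < M := Nat.mod_lt n hM
    have : n < M * (n / M) + M := by omega
    rw [hk]; exact_mod_cast this
  have hrZ : (r:ℤ) < M := by exact_mod_cast hr
  have hsub : sl M r A ∩ Icc (-(n:ℤ)) n ⊆
      (fun x => (M:ℤ)*x + r) '' (A ∩ Icc (-(k+1)) (k+1)) := by
    rintro y ⟨⟨x, hxA, rfl⟩, hy⟩
    rw [Set.mem_Icc] at hy
    have hy1 : -(n:ℤ) ≤ (M:ℤ) * x + r := hy.1
    have hy2 : (M:ℤ) * x + r ≤ n := hy.2
    refine ⟨x, ⟨hxA, ?_⟩, rfl⟩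
    rw [Set.mem_Icc]
    have hrnn : (0:ℤ) ≤ r := Int.ofNat_nonneg r
    constructor
    · -- lower bound
      have hlt : (M:ℤ) * (-(k+2)) < M * x := by nlinarith [hy1]
      have := lt_of_mul_lt_mul_left hlt (le_of_lt hMZ)
      omega
    · have hlt : (M:ℤ) * x < M * (k+1) := by nlinarith [hy2]
      have := lt_of_mul_lt_mul_left hlt (le_of_lt hMZ)
      omega
  calc (sl M r A ∩ Icc (-(n:ℤ)) n).ncard
      ≤ ((fun x => (M:ℤ)*x + r) '' (A ∩ Icc (-(k+1)) (k+1))).ncard :=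
        Set.ncard_le_ncard hsub (((Set.finite_Icc _ _).inter_of_right _).image _)
    _ = (A ∩ Icc (-(k+1)) (k+1)).ncard :=
        Set.ncard_image_of_injective _ (sl_inj M hM r)
    _ = (A ∩ Icc (-((n/M+1 : ℕ):ℤ)) ((n/M+1 : ℕ):ℤ)).ncard := by
        rw [hk]; norm_num

lemma slice_lower (M r : ℕ) (hM : 0 < M) (hr : r < M) (A : Set ℤ) (n : ℕ) (hn : M ≤ n) :
    (A ∩ Icc (-((n/M-1 : ℕ):ℤ)) ((n/M-1 : ℕ):ℤ)).ncard ≤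
      (sl M r A ∩ Icc (-(n:ℤ)) n).ncard := by
  have hMZ : (0:ℤ) < M := by exact_mod_cast hM
  have hdiv1 : 1 ≤ n / M := (Nat.one_le_div_iff hM).mpr hn
  set km : ℤ := ((n / M - 1 : ℕ) : ℤ) with hkm
  have hkmk : km + 1 = ((n / M : ℕ) : ℤ) := by rw [hkm]; push_cast [Nat.cast_sub hdiv1]; ring
  have hk0 : (M:ℤ) * (km + 1) ≤ n := by
    rw [hkmk]
    have h := Nat.div_mul_le_self n M
    have h' : ((n / M : ℕ) : ℤ) * (M : ℤ) ≤ (n : ℤ) := by exact_mod_cast h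
    rw [mul_comm]
    exact h'
  have hrZ : (r:ℤ) < M := by exact_mod_cast hr
  have hrnn : (0:ℤ) ≤ r := Int.ofNat_nonneg r
  have hsub : (fun x => (M:ℤ)*x + r) '' (A ∩ Icc (-km) km) ⊆ sl M r A ∩ Icc (-(n:ℤ)) n := by
    rintro y ⟨x, ⟨hxA, hx⟩, rfl⟩
    rw [Set.mem_Icc] at hx
    refine ⟨⟨x, hxA, rfl⟩, ?_⟩
    rw [Set.mem_Icc]
    have h1 : (M:ℤ) * x ≤ M * km := by nlinarith [hx.2]
    have h2 : (M:ℤ) * (-km) ≤ M * x := by nlinarith [hx.1]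
    constructor
    · show -(n:ℤ) ≤ (M:ℤ) * x + r
      nlinarith
    · show (M:ℤ) * x + r ≤ n
      nlinarith
  calc (A ∩ Icc (-km) km).ncard
      = ((fun x => (M:ℤ)*x + r) '' (A ∩ Icc (-km) km)).ncard :=
        (Set.ncard_image_of_injective _ (sl_inj M hM r)).symm
    _ ≤ (sl M r A ∩ Icc (-(n:ℤ)) n).ncard :=
        Set.ncard_le_ncard hsub (cnt_fin _ _)

lemma slice_disjoint (M : ℕ) (r r' : ℕ) (hr : r < M) (hr' : r' < M) (hne : r ≠ r')
    (A B : Set ℤ) : Disjoint (sl M r A) (sl M r' B) := by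
  rw [Set.disjoint_left]
  rintro y ⟨x, _, rfl⟩ ⟨x', _, h⟩
  simp only at h
  have hdvd : (M:ℤ) ∣ ((r:ℤ) - r') := ⟨x' - x, by rw [mul_sub]; linarith⟩
  have habs : |((r:ℤ) - r')| < M := by
    rw [abs_lt]
    constructor <;> omega
  have := Int.eq_zero_of_abs_lt_dvd hdvd habs
  have : (r:ℤ) = r' := by omega
  exact hne (by exact_mod_cast this)

lemma ncard_biUnion (s : Finset ℕ) (f : ℕ → Set ℤ) (hfin : ∀ i ∈ s, (f i).Finite)
    (hdisj : ∀ i ∈ s, ∀ j ∈ s, i ≠ j → Disjoint (f i) (f j)) :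
    (⋃ i ∈ s, f i).ncard = ∑ i ∈ s, (f i).ncard := by
  classical
  induction s using Finset.induction_on with
  | empty => simp
  | insert _ _ hnotmem ih =>
    rename_i a s
    rw [Finset.set_biUnion_insert, Finset.sum_insert hnotmem]
    have hfin' : ∀ i ∈ s, (f i).Finite := fun i hi => hfin i (Finset.mem_insert_of_mem hi)
    have hdisj' : ∀ i ∈ s, ∀ j ∈ s, i ≠ j → Disjoint (f i) (f j) :=
      fun i hi j hj => hdisj i (Finset.mem_insert_of_mem hi) j (Finset.mem_insert_of_mem hj)
    have hd : Disjoint (f a) (⋃ i ∈ s, f i) := by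
      rw [Set.disjoint_iUnion₂_right]
      intro i hi
      exact hdisj a (Finset.mem_insert_self a s) i (Finset.mem_insert_of_mem hi)
        (fun hai => hnotmem (hai ▸ hi))
    rw [Set.ncard_union_eq hd (hfin a (Finset.mem_insert_self a s))
      (Set.Finite.biUnion s.finite_toSet hfin'), ih hfin' hdisj']

lemma decomp (M : ℕ) (hM : 0 < M) (A' : Set ℤ) :
    A' = ⋃ r ∈ Finset.range M, sl M r {x | (M:ℤ)*x + (r:ℤ) ∈ A'} := by
  ext a
  simp only [Set.mem_iUnion, Finset.mem_range, sl, Set.mem_image, Set.mem_setOf_eq]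
  constructor
  · intro ha
    have hMZ : (0:ℤ) < M := by exact_mod_cast hM
    refine ⟨(a % M).toNat, ?_, a / M, ?_, ?_⟩
    · have h1 : 0 ≤ a % M := Int.emod_nonneg a hMZ.ne'
      have h2 : a % M < M := Int.emod_lt_of_pos a hMZ
      omega
    · rw [Int.toNat_of_nonneg (Int.emod_nonneg a hMZ.ne')]
      rw [Int.mul_ediv_add_emod a M]; exact ha
    · rw [Int.toNat_of_nonneg (Int.emod_nonneg a hMZ.ne')]
      exact Int.mul_ediv_add_emod a M
  · rintro ⟨r, _, x, hx, rfl⟩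
    exact hx

/-- count of a disjoint union of slices over all residues -/
lemma cnt_sum (M : ℕ) (hM : 0 < M) (f : ℕ → Set ℤ) (n : ℕ) :
    ((⋃ r ∈ Finset.range M, sl M r (f r)) ∩ Icc (-(n:ℤ)) n).ncard
      = ∑ r ∈ Finset.range M, (sl M r (f r) ∩ Icc (-(n:ℤ)) n).ncard := by
  rw [Set.iUnion₂_inter]
  exact ncard_biUnion _ _ (fun i _ => cnt_fin _ _)
    (fun i hi j hj hij => Disjoint.mono inter_subset_left inter_subset_left
      (slice_disjoint M i j (Finset.mem_range.mp hi) (Finset.mem_range.mp hj) hij _ _))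


lemma alg1 {c X Y Mr : ℝ} (hX : 0 < X) (hY : 0 < Y) (hM : 1 ≤ Mr) (hc0 : 0 ≤ c)
    (hcY : c ≤ Y) (h : Mr * Y ≤ X + 3 * Mr) : c / X ≤ c / (Mr * Y) + 3 / X := by
  have hMpos : 0 < Mr := lt_of_lt_of_le one_pos hM
  have hMY : 0 < Mr * Y := mul_pos hMpos hY
  have key : c * X ≥ c * (Mr * Y) - 3 * (Mr * Y) := by nlinarith
  rw [div_add_div _ _ hMY.ne' hX.ne', div_le_div_iff₀ hX (by positivity)]
  nlinarith [mul_le_mul_of_nonneg_right key hX.le]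

lemma alg2 {c X Y Mr : ℝ} (hX : 0 < X) (hY : 0 < Y) (hM : 1 ≤ Mr) (hc0 : 0 ≤ c)
    (hcY : c ≤ Y) (h : X ≤ Mr * Y + 3 * Mr) : c / (Mr * Y) ≤ c / X + 3 / X := by
  have hMpos : 0 < Mr := lt_of_lt_of_le one_pos hM
  have hMY : 0 < Mr * Y := mul_pos hMpos hY
  have key : c * X ≤ c * (Mr * Y) + 3 * (Mr * Y) := by nlinarith
  rw [← add_div, div_le_div_iff₀ hMY hX]
  nlinarith [mul_le_mul_of_nonneg_right key (le_of_lt hX)]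


noncomputable def dseq (A : Set ℤ) (n : ℕ) : ℝ :=
  ((A ∩ Set.Icc (-(n : ℤ)) (n : ℤ)).ncard : ℝ) / (2 * n + 1)

lemma X_pos (n : ℕ) : (0:ℝ) < 2 * (n:ℝ) + 1 := by positivity

lemma dseq_in01 (A : Set ℤ) : In01 (dseq A) := by
  intro n
  constructor
  · rw [dseq]; positivity
  · rw [dseq, div_le_one (X_pos n)]
    have h := cnt_le_card A n
    have h2 : ((A ∩ Icc (-(n:ℤ)) n).ncard : ℝ) ≤ ((2*n+1 : ℕ) : ℝ) := by exact_mod_cast h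
    push_cast at h2; linarith

variable {M : ℕ}

lemma slice_real_upper (hM : 0 < M) {r : ℕ} (hr : r < M) (A : Set ℤ) (n : ℕ) :
    ((sl M r A ∩ Icc (-(n:ℤ)) n).ncard : ℝ) / (2 * n + 1)
      ≤ (1/(M:ℝ)) * dseq A (n/M + 1) + 3 / (2 * n + 1) := by
  set k := n / M with hk
  set c : ℝ := ((A ∩ Icc (-((k+1:ℕ):ℤ)) ((k+1:ℕ):ℤ)).ncard : ℝ) with hc
  have hc0 : 0 ≤ c := by positivity
  have hcnt : ((sl M r A ∩ Icc (-(n:ℤ)) n).ncard : ℝ) ≤ c :=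
    Nat.cast_le.mpr (slice_upper M r hM hr A n)
  set Y : ℝ := 2 * ((k+1 : ℕ) : ℝ) + 1 with hYdef
  have hY : 0 < Y := X_pos (k+1)
  have hcY : c ≤ Y := by
    have h2 : c ≤ ((2*(k+1)+1 : ℕ) : ℝ) := Nat.cast_le.mpr (cnt_le_card A (k+1))
    rw [hYdef]; push_cast at h2 ⊢; linarith
  have hMk : ((k:ℝ)) * M ≤ n := by exact_mod_cast Nat.div_mul_le_self n M
  have hbig : (M:ℝ) * Y ≤ (2 * n + 1) + 3 * M := by
    rw [hYdef]; push_cast; nlinarith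
  have hM1 : (1:ℝ) ≤ M := by exact_mod_cast hM
  have halg := alg1 (X_pos n) hY hM1 hc0 hcY hbig
  have hrw : (1/(M:ℝ)) * dseq A (k+1) = c / ((M:ℝ) * Y) := by
    have hMne : (M:ℝ) ≠ 0 := by positivity
    have hd : dseq A (k+1) = c / Y := by rw [dseq, hc, hYdef]
    rw [hd]
    field_simp
  calc ((sl M r A ∩ Icc (-(n:ℤ)) n).ncard : ℝ) / (2 * n + 1)
      ≤ c / (2 * n + 1) := by gcongr
    _ ≤ c / ((M:ℝ) * Y) + 3 / (2 * n + 1) := halg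
    _ = (1/(M:ℝ)) * dseq A (k+1) + 3 / (2 * n + 1) := by rw [hrw]

lemma slice_real_lower (hM : 0 < M) {r : ℕ} (hr : r < M) (A : Set ℤ) {n : ℕ} (hn : M ≤ n) :
    (1/(M:ℝ)) * dseq A (n/M - 1)
      ≤ ((sl M r A ∩ Icc (-(n:ℤ)) n).ncard : ℝ) / (2 * n + 1) + 3 / (2 * n + 1) := by
  set k := n / M with hk
  have hdiv1 : 1 ≤ k := (Nat.one_le_div_iff hM).mpr hn
  set c : ℝ := ((A ∩ Icc (-((k-1:ℕ):ℤ)) ((k-1:ℕ):ℤ)).ncard : ℝ) with hc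
  have hc0 : 0 ≤ c := by positivity
  have hcnt : c ≤ ((sl M r A ∩ Icc (-(n:ℤ)) n).ncard : ℝ) :=
    Nat.cast_le.mpr (slice_lower M r hM hr A n hn)
  set Y : ℝ := 2 * ((k-1 : ℕ) : ℝ) + 1 with hYdef
  have hY : 0 < Y := X_pos (k-1)
  have hcY : c ≤ Y := by
    have h2 : c ≤ ((2*(k-1)+1 : ℕ) : ℝ) := Nat.cast_le.mpr (cnt_le_card A (k-1))
    rw [hYdef]; push_cast at h2 ⊢; linarith
  have hkm : ((k-1 : ℕ) : ℝ) = (k:ℝ) - 1 := by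
    push_cast [Nat.cast_sub hdiv1]; ring
  have hnk : (n:ℝ) + 1 ≤ (k:ℝ) * M + M := by
    have h := Nat.div_add_mod n M
    have h2 : n % M < M := Nat.mod_lt n hM
    have h3 : n + 1 ≤ M * (n / M) + M := by omega
    have h4 : (n:ℝ) + 1 ≤ (M:ℝ) * (k:ℝ) + M := by rw [hk]; exact_mod_cast h3
    linarith [mul_comm (k:ℝ) (M:ℝ)]
  have hbig : (2 * (n:ℝ) + 1) ≤ (M:ℝ) * Y + 3 * M := by
    rw [hYdef, hkm]; nlinarith
  have hM1 : (1:ℝ) ≤ M := by exact_mod_cast hM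
  have halg := alg2 (X_pos n) hY hM1 hc0 hcY hbig
  have hrw : (1/(M:ℝ)) * dseq A (k-1) = c / ((M:ℝ) * Y) := by
    have hMne : (M:ℝ) ≠ 0 := by positivity
    have hd : dseq A (k-1) = c / Y := by rw [dseq, hc, hYdef]
    rw [hd]
    field_simp
  rw [hrw]
  calc c / ((M:ℝ) * Y) ≤ c / (2 * n + 1) + 3 / (2 * n + 1) := halg
    _ ≤ ((sl M r A ∩ Icc (-(n:ℤ)) n).ncard : ℝ) / (2 * n + 1) + 3 / (2 * n + 1) := by
        gcongr

lemma dseq_union_eq (hM : 0 < M) (f : ℕ → Set ℤ) (n : ℕ) :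
    dseq (⋃ r ∈ Finset.range M, sl M r (f r)) n
      = ∑ r ∈ Finset.range M, ((sl M r (f r) ∩ Icc (-(n:ℤ)) n).ncard : ℝ) / (2 * n + 1) := by
  rw [dseq, cnt_sum M hM f n]
  push_cast
  rw [Finset.sum_div]

lemma eps_bound (hM : 0 < M) {ε : ℝ} (hε : 0 < ε) :
    ∀ᶠ n : ℕ in atTop, (M:ℝ) * (3 / (2 * n + 1)) ≤ ε := by
  filter_upwards [eventually_ge_atTop ⌈3 * (M:ℝ) / ε⌉₊] with n hn
  have h1 : 3 * (M:ℝ) / ε ≤ n := (Nat.ceil_le).mp hn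
  have h2 : 3 * (M:ℝ) ≤ ε * n := by
    rw [div_le_iff₀ hε] at h1; linarith
  have h3 : (0:ℝ) ≤ n := Nat.cast_nonneg n
  rw [mul_div_assoc'] ; rw [div_le_iff₀ (X_pos n)]
  nlinarith

lemma main_up (hM : 0 < M) (f : ℕ → Set ℤ) {ε : ℝ} (hε : 0 < ε) :
    ∀ᶠ n : ℕ in atTop, dseq (⋃ r ∈ Finset.range M, sl M r (f r)) n
      ≤ (∑ r ∈ Finset.range M, (1/(M:ℝ)) * dseq (f r) (n/M + 1)) + ε := by
  filter_upwards [eps_bound hM hε] with n hn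
  rw [dseq_union_eq hM f n]
  calc ∑ r ∈ Finset.range M, ((sl M r (f r) ∩ Icc (-(n:ℤ)) n).ncard : ℝ) / (2 * n + 1)
      ≤ ∑ r ∈ Finset.range M, ((1/(M:ℝ)) * dseq (f r) (n/M + 1) + 3 / (2 * n + 1)) :=
        Finset.sum_le_sum fun r hr =>
          slice_real_upper hM (Finset.mem_range.mp hr) (f r) n
    _ = (∑ r ∈ Finset.range M, (1/(M:ℝ)) * dseq (f r) (n/M + 1)) + (M:ℝ) * (3 / (2 * n + 1)) := by
        rw [Finset.sum_add_distrib, Finset.sum_const, Finset.card_range, nsmul_eq_mul]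
    _ ≤ _ := by linarith

lemma main_lo (hM : 0 < M) (f : ℕ → Set ℤ) {ε : ℝ} (hε : 0 < ε) :
    ∀ᶠ n : ℕ in atTop, (∑ r ∈ Finset.range M, (1/(M:ℝ)) * dseq (f r) (n/M - 1))
      ≤ dseq (⋃ r ∈ Finset.range M, sl M r (f r)) n + ε := by
  filter_upwards [eps_bound hM hε, eventually_ge_atTop M] with n hn hnM
  rw [dseq_union_eq hM f n]
  calc ∑ r ∈ Finset.range M, (1/(M:ℝ)) * dseq (f r) (n/M - 1)
      ≤ ∑ r ∈ Finset.range M,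
          (((sl M r (f r) ∩ Icc (-(n:ℤ)) n).ncard : ℝ) / (2 * n + 1) + 3 / (2 * n + 1)) :=
        Finset.sum_le_sum fun r hr =>
          slice_real_lower hM (Finset.mem_range.mp hr) (f r) hnM
    _ = (∑ r ∈ Finset.range M, ((sl M r (f r) ∩ Icc (-(n:ℤ)) n).ncard : ℝ) / (2 * n + 1))
          + (M:ℝ) * (3 / (2 * n + 1)) := by
        rw [Finset.sum_add_distrib, Finset.sum_const, Finset.card_range, nsmul_eq_mul]
    _ ≤ _ := by linarith

lemma in01_cmul_comp (hM : 0 < M) (A : Set ℤ) (g : ℕ → ℕ) :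
    In01 (fun n => (1/(M:ℝ)) * dseq A (g n)) := by
  have hM1 : (1:ℝ) ≤ M := by exact_mod_cast hM
  intro n
  have h := dseq_in01 A (g n)
  constructor
  · have : (0:ℝ) ≤ 1/(M:ℝ) := by positivity
    exact mul_nonneg this h.1
  · calc (1/(M:ℝ)) * dseq A (g n) ≤ (1/(M:ℝ)) * 1 :=
        mul_le_mul_of_nonneg_left h.2 (by positivity)
    _ ≤ 1 := by rw [mul_one]; rw [div_le_one (by positivity)]; exact hM1

lemma in01_sum (hM : 0 < M) (f : ℕ → Set ℤ) (g : ℕ → ℕ) :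
    In01 (fun n => ∑ r ∈ Finset.range M, (1/(M:ℝ)) * dseq (f r) (g n)) := by
  intro n
  constructor
  · exact Finset.sum_nonneg fun r _ => (in01_cmul_comp hM (f r) g n).1
  · calc ∑ r ∈ Finset.range M, (1/(M:ℝ)) * dseq (f r) (g n)
        ≤ ∑ _r ∈ Finset.range M, (1/(M:ℝ)) * 1 := Finset.sum_le_sum fun r _ =>
          mul_le_mul_of_nonneg_left (dseq_in01 (f r) (g n)).2 (by positivity)
      _ = 1 := by
        rw [Finset.sum_const, Finset.card_range, nsmul_eq_mul, mul_one]
        field_simp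

lemma term_limsup (hM : 0 < M) (A : Set ℤ) :
    limsup (fun n => (1/(M:ℝ)) * dseq A (n/M + 1)) atTop
      = (1/(M:ℝ)) * limsup (dseq A) atTop := by
  have hc : (0:ℝ) < 1/(M:ℝ) := by positivity
  have hin : In01 (fun n => dseq A (n/M + 1)) := fun n => dseq_in01 A _
  rw [limsup_cmul hc hin, limsup_comp_div_add (dseq A) M hM]

lemma term_liminf (hM : 0 < M) (A : Set ℤ) :
    liminf (fun n => (1/(M:ℝ)) * dseq A (n/M - 1)) atTop
      = (1/(M:ℝ)) * liminf (dseq A) atTop := by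
  have hc : (0:ℝ) < 1/(M:ℝ) := by positivity
  have hin : In01 (fun n => dseq A (n/M - 1)) := fun n => dseq_in01 A _
  rw [liminf_cmul hc hin, liminf_comp_div_sub (dseq A) M hM]

/-- subadditivity of upper density over residue decomposition -/
lemma prop_limsup (hM : 0 < M) (f : ℕ → Set ℤ) :
    limsup (dseq (⋃ r ∈ Finset.range M, sl M r (f r))) atTop
      ≤ ∑ r ∈ Finset.range M, (1/(M:ℝ)) * limsup (dseq (f r)) atTop := by
  have h1 : limsup (dseq (⋃ r ∈ Finset.range M, sl M r (f r))) atTop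
      ≤ limsup (fun n => ∑ r ∈ Finset.range M, (1/(M:ℝ)) * dseq (f r) (n/M + 1)) atTop :=
    limsup_le_limsup_eps (dseq_in01 _) (in01_sum hM f _) (fun ε hε => main_up hM f hε)
  refine h1.trans ?_
  have h2 := limsup_sum_le (Finset.range M) (fun r n => (1/(M:ℝ)) * dseq (f r) (n/M + 1))
    (fun r _ => in01_cmul_comp hM (f r) _)
  refine h2.trans (le_of_eq (Finset.sum_congr rfl fun r _ => term_limsup hM (f r)))

/-- superadditivity of lower density over residue decomposition -/
lemma prop_liminf (hM : 0 < M) (f : ℕ → Set ℤ) :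
    ∑ r ∈ Finset.range M, (1/(M:ℝ)) * liminf (dseq (f r)) atTop
      ≤ liminf (dseq (⋃ r ∈ Finset.range M, sl M r (f r))) atTop := by
  have h2 := le_liminf_sum (Finset.range M) (fun r n => (1/(M:ℝ)) * dseq (f r) (n/M - 1))
    (fun r _ => in01_cmul_comp hM (f r) _)
  have h1 : liminf (fun n => ∑ r ∈ Finset.range M, (1/(M:ℝ)) * dseq (f r) (n/M - 1)) atTop
      ≤ liminf (dseq (⋃ r ∈ Finset.range M, sl M r (f r))) atTop :=
    liminf_le_liminf_eps (in01_sum hM f _) (dseq_in01 _) (fun ε hε => main_lo hM f hε)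
  calc ∑ r ∈ Finset.range M, (1/(M:ℝ)) * liminf (dseq (f r)) atTop
      = ∑ r ∈ Finset.range M, liminf (fun n => (1/(M:ℝ)) * dseq (f r) (n/M - 1)) atTop :=
        Finset.sum_congr rfl fun r _ => (term_liminf hM (f r)).symm
    _ ≤ _ := h2.trans h1

lemma sum_const_coll (hM : 0 < M) (x : ℝ) :
    ∑ _r ∈ Finset.range M, (1/(M:ℝ)) * x = x := by
  rw [Finset.sum_const, Finset.card_range, nsmul_eq_mul]
  have : (M:ℝ) ≠ 0 := by positivity
  field_simp

lemma prop_const_limsup (hM : 0 < M) (A : Set ℤ) :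
    limsup (dseq (⋃ r ∈ Finset.range M, sl M r A)) atTop = limsup (dseq A) atTop := by
  apply le_antisymm
  · have := prop_limsup hM (fun _ => A)
    rwa [sum_const_coll hM] at this
  · have h1 : limsup (fun n => dseq A (n/M - 1)) atTop
        ≤ limsup (dseq (⋃ r ∈ Finset.range M, sl M r A)) atTop := by
      refine limsup_le_limsup_eps (fun n => dseq_in01 A _) (dseq_in01 _) (fun ε hε => ?_)
      filter_upwards [main_lo hM (fun _ => A) hε] with n hn
      calc dseq A (n/M - 1)
          = ∑ _r ∈ Finset.range M, (1/(M:ℝ)) * dseq A (n/M - 1) := (sum_const_coll hM _).symm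
        _ ≤ _ := hn
    rwa [limsup_comp_div_sub (dseq A) M hM] at h1

lemma prop_const_liminf (hM : 0 < M) (A : Set ℤ) :
    liminf (dseq (⋃ r ∈ Finset.range M, sl M r A)) atTop = liminf (dseq A) atTop := by
  apply le_antisymm
  · have h1 : liminf (dseq (⋃ r ∈ Finset.range M, sl M r A)) atTop
        ≤ liminf (fun n => dseq A (n/M + 1)) atTop := by
      refine liminf_le_liminf_eps (dseq_in01 _) (fun n => dseq_in01 A _) (fun ε hε => ?_)
      filter_upwards [main_up hM (fun _ => A) hε] with n hn
      calc dseq (⋃ r ∈ Finset.range M, sl M r A) n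
          ≤ (∑ _r ∈ Finset.range M, (1/(M:ℝ)) * dseq A (n/M + 1)) + ε := hn
        _ = dseq A (n/M + 1) + ε := by rw [sum_const_coll hM]
    rwa [liminf_comp_div_add (dseq A) M hM] at h1
  · have := prop_liminf hM (fun _ => A)
    rwa [sum_const_coll hM] at this


lemma mem_translate {S : Set ℤ} {t x : ℤ} : x ∈ translateSet S t ↔ ∃ s ∈ S, s + t = x := by
  simp only [translateSet, Set.mem_image]

variable (M : ℕ)

lemma unique_mr {u v : ℤ} {r₁ r₂ : ℕ} (hM : 0 < M) (hr₁ : r₁ < M) (hr₂ : r₂ < M)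
    (h : (M:ℤ) * u + r₁ = (M:ℤ) * v + r₂) : u = v ∧ r₁ = r₂ := by
  have hdvd : (M:ℤ) ∣ ((r₁:ℤ) - r₂) := ⟨v - u, by rw [mul_sub]; linarith⟩
  have habs : |((r₁:ℤ) - r₂)| < M := by rw [abs_lt]; omega
  have h0 := Int.eq_zero_of_abs_lt_dvd hdvd habs
  have hr : r₁ = r₂ := by omega
  have hMne : (M:ℤ) ≠ 0 := by exact_mod_cast hM.ne'
  refine ⟨mul_left_cancel₀ hMne (by omega), hr⟩

lemma cover_D (hM : 0 < M) {S A : Set ℤ} (h : SCovering S A) :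
    SCovering ((fun x => (M:ℤ) * x) '' S) (⋃ r ∈ Finset.range M, sl M r A) := by
  intro t
  have hMZ : (0:ℤ) < M := by exact_mod_cast hM
  obtain ⟨a, haA, hmem⟩ := h (t / (M:ℤ))
  obtain ⟨s, hsS, hsa⟩ := mem_translate.mp hmem
  have hnn : 0 ≤ t % (M:ℤ) := Int.emod_nonneg t hMZ.ne'
  have hlt : t % (M:ℤ) < M := Int.emod_lt_of_pos t hMZ
  refine ⟨(M:ℤ) * a + ((t % (M:ℤ)).toNat : ℤ), ?_, ?_⟩
  · rw [Set.mem_iUnion₂]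
    exact ⟨(t % (M:ℤ)).toNat, by simp only [Finset.mem_coe, Finset.mem_range]; omega,
      ⟨a, haA, rfl⟩⟩
  · rw [mem_translate]
    refine ⟨(M:ℤ) * s, ⟨s, hsS, rfl⟩, ?_⟩
    rw [Int.toNat_of_nonneg hnn]
    have h5 : (M:ℤ) * (s + a) = M * (t / M) := by rw [hsa]
    have h6 := Int.mul_ediv_add_emod t (M:ℤ)
    rw [mul_add] at h5
    linarith

lemma pack_D (hM : 0 < M) {S A : Set ℤ} (h : SPacking S A) :
    SPacking ((fun x => (M:ℤ) * x) '' S) (⋃ r ∈ Finset.range M, sl M r A) := by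
  intro a₁ h₁ a₂ h₂ hne
  rw [Set.mem_iUnion₂] at h₁ h₂
  obtain ⟨r₁, hr₁m, x₁, hx₁, rfl⟩ := h₁
  obtain ⟨r₂, hr₂m, x₂, hx₂, rfl⟩ := h₂
  have hr₁ : r₁ < M := by simpa using hr₁m
  have hr₂ : r₂ < M := by simpa using hr₂m
  rw [Set.disjoint_left]
  rintro y hy₁ hy₂
  obtain ⟨z₁, hz₁, hze₁⟩ := mem_translate.mp hy₁
  obtain ⟨z₂, hz₂, hze₂⟩ := mem_translate.mp hy₂
  obtain ⟨s₁, hs₁, rfl⟩ := hz₁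
  obtain ⟨s₂, hs₂, rfl⟩ := hz₂
  have hze₁' : (M:ℤ) * s₁ + ((M:ℤ) * x₁ + r₁) = y := hze₁
  have hze₂' : (M:ℤ) * s₂ + ((M:ℤ) * x₂ + r₂) = y := hze₂
  have heq : (M:ℤ) * (s₁ + x₁) + r₁ = (M:ℤ) * (s₂ + x₂) + r₂ := by
    rw [mul_add, mul_add]; linarith
  obtain ⟨hsx, hrr⟩ := unique_mr M hM hr₁ hr₂ heq
  by_cases hxx : x₁ = x₂
  · exact hne (by rw [hxx, hrr])
  · have hdisj := h x₁ hx₁ x₂ hx₂ hxx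
    rw [Set.disjoint_left] at hdisj
    exact hdisj (mem_translate.mpr ⟨s₁, hs₁, rfl⟩)
      (mem_translate.mpr ⟨s₂, hs₂, by rw [← hsx]⟩)

lemma cover_slice (hM : 0 < M) {S A' : Set ℤ}
    (h : SCovering ((fun x => (M:ℤ) * x) '' S) A') (r : ℕ) :
    SCovering S {x : ℤ | (M:ℤ) * x + (r:ℤ) ∈ A'} := by
  intro t
  obtain ⟨a, haA, hmem⟩ := h ((M:ℤ) * t + r)
  obtain ⟨z, hz, hze⟩ := mem_translate.mp hmem
  obtain ⟨s, hsS, rfl⟩ := hz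
  have hze' : (M:ℤ) * s + a = (M:ℤ) * t + r := hze
  refine ⟨t - s, ?_, mem_translate.mpr ⟨s, hsS, by ring⟩⟩
  show (M:ℤ) * (t - s) + r ∈ A'
  have : (M:ℤ) * (t - s) + r = a := by rw [mul_sub]; linarith
  rw [this]; exact haA

lemma pack_slice (hM : 0 < M) {S A' : Set ℤ}
    (h : SPacking ((fun x => (M:ℤ) * x) '' S) A') (r : ℕ) :
    SPacking S {x : ℤ | (M:ℤ) * x + (r:ℤ) ∈ A'} := by
  intro x₁ hx₁ x₂ hx₂ hne
  have hMne : (M:ℤ) ≠ 0 := by exact_mod_cast hM.ne'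
  have haux : (M:ℤ) * x₁ + r ≠ (M:ℤ) * x₂ + r := by
    intro hc
    exact hne (mul_left_cancel₀ hMne (by linarith))
  have hdisj := h ((M:ℤ) * x₁ + r) hx₁ ((M:ℤ) * x₂ + r) hx₂ haux
  rw [Set.disjoint_left] at hdisj ⊢
  rintro y hy₁ hy₂
  obtain ⟨s₁, hs₁, rfl⟩ := mem_translate.mp hy₁
  obtain ⟨s₂, hs₂, heq⟩ := mem_translate.mp hy₂
  refine hdisj (a := (M:ℤ) * s₁ + ((M:ℤ) * x₁ + r))
    (mem_translate.mpr ⟨(M:ℤ) * s₁, ⟨s₁, hs₁, rfl⟩, rfl⟩)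
    (mem_translate.mpr ⟨(M:ℤ) * s₂, ⟨s₂, hs₂, rfl⟩, ?_⟩)
  have : (M:ℤ) * (s₂ + x₂) = (M:ℤ) * (s₁ + x₁) := by rw [heq]
  rw [mul_add, mul_add] at this
  linarith

-- density bridges
lemma upperDensity_eq (A : Set ℤ) : upperDensity A = limsup (dseq A) atTop := rfl
lemma lowerDensity_eq (A : Set ℤ) : lowerDensity A = liminf (dseq A) atTop := rfl

lemma lowerDensity_nonneg (A : Set ℤ) : 0 ≤ lowerDensity A :=
  (dseq_in01 A).liminf_nonneg

lemma upperDensity_le_one (A : Set ℤ) : upperDensity A ≤ 1 :=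
  (dseq_in01 A).limsup_le_one

lemma cover_univ {S : Set ℤ} (h0 : (0:ℤ) ∈ S) : SCovering S Set.univ :=
  fun t => ⟨t, Set.mem_univ t, mem_translate.mpr ⟨0, h0, zero_add t⟩⟩

lemma pack_empty (S : Set ℤ) : SPacking S ∅ :=
  fun a₁ h₁ => absurd h₁ (Set.notMem_empty a₁)

lemma bddBelow_cov (S : Set ℤ) : BddBelow (lowerDensity '' {A | SCovering S A}) := by
  refine ⟨0, ?_⟩
  rintro b ⟨A, _, rfl⟩
  exact lowerDensity_nonneg A

lemma bddAbove_pack (S : Set ℤ) : BddAbove (upperDensity '' {A | SPacking S A}) := by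
  refine ⟨1, ?_⟩
  rintro b ⟨A, _, rfl⟩
  exact upperDensity_le_one A

lemma dC_eq (hM : 0 < M) (S : Set ℤ) (h0 : (0:ℤ) ∈ S) :
    dC ((fun x => (M:ℤ) * x) '' S) = dC S := by
  have h0' : (0:ℤ) ∈ (fun x => (M:ℤ) * x) '' S := ⟨0, h0, by simp⟩
  apply le_antisymm
  · refine le_csInf ⟨_, ⟨Set.univ, cover_univ h0, rfl⟩⟩ ?_
    rintro b ⟨A, hA, rfl⟩
    calc dC ((fun x => (M:ℤ) * x) '' S)
        ≤ lowerDensity (⋃ r ∈ Finset.range M, sl M r A) :=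
          csInf_le (bddBelow_cov _) ⟨_, cover_D M hM hA, rfl⟩
      _ = lowerDensity A := by
          rw [lowerDensity_eq, lowerDensity_eq, prop_const_liminf hM]
  · refine le_csInf ⟨_, ⟨Set.univ, cover_univ h0', rfl⟩⟩ ?_
    rintro b ⟨A', hA', rfl⟩
    have hdc : ∀ r : ℕ, dC S ≤ lowerDensity {x : ℤ | (M:ℤ) * x + (r:ℤ) ∈ A'} := fun r =>
      csInf_le (bddBelow_cov S) ⟨_, cover_slice M hM hA' r, rfl⟩
    have hnn : (0:ℝ) ≤ 1/(M:ℝ) := by positivity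
    calc dC S = ∑ _r ∈ Finset.range M, (1/(M:ℝ)) * dC S := (sum_const_coll hM _).symm
      _ ≤ ∑ r ∈ Finset.range M, (1/(M:ℝ))
            * liminf (dseq {x : ℤ | (M:ℤ) * x + (r:ℤ) ∈ A'}) atTop :=
          Finset.sum_le_sum fun r _ => mul_le_mul_of_nonneg_left
            ((lowerDensity_eq _) ▸ hdc r) hnn
      _ ≤ liminf (dseq (⋃ r ∈ Finset.range M, sl M r {x : ℤ | (M:ℤ) * x + (r:ℤ) ∈ A'})) atTop :=
          prop_liminf hM _
      _ = lowerDensity A' := by rw [lowerDensity_eq, ← decomp M hM A']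

lemma dP_eq (hM : 0 < M) (S : Set ℤ) :
    dP ((fun x => (M:ℤ) * x) '' S) = dP S := by
  apply le_antisymm
  · refine csSup_le ⟨_, ⟨∅, pack_empty _, rfl⟩⟩ ?_
    rintro b ⟨A', hA', rfl⟩
    have hdp : ∀ r : ℕ, upperDensity {x : ℤ | (M:ℤ) * x + (r:ℤ) ∈ A'} ≤ dP S := fun r =>
      le_csSup (bddAbove_pack S) ⟨_, pack_slice M hM hA' r, rfl⟩
    have hnn : (0:ℝ) ≤ 1/(M:ℝ) := by positivity
    calc upperDensity A'
        = limsup (dseq (⋃ r ∈ Finset.range M, sl M r {x : ℤ | (M:ℤ) * x + (r:ℤ) ∈ A'})) atTop :=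
          by rw [upperDensity_eq, ← decomp M hM A']
      _ ≤ ∑ r ∈ Finset.range M, (1/(M:ℝ))
            * limsup (dseq {x : ℤ | (M:ℤ) * x + (r:ℤ) ∈ A'}) atTop := prop_limsup hM _
      _ ≤ ∑ _r ∈ Finset.range M, (1/(M:ℝ)) * dP S :=
          Finset.sum_le_sum fun r _ => mul_le_mul_of_nonneg_left
            ((upperDensity_eq _) ▸ hdp r) hnn
      _ = dP S := sum_const_coll hM _
  · refine csSup_le ⟨_, ⟨∅, pack_empty _, rfl⟩⟩ ?_
    rintro b ⟨A, hA, rfl⟩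
    calc upperDensity A = upperDensity (⋃ r ∈ Finset.range M, sl M r A) := by
          rw [upperDensity_eq, upperDensity_eq, prop_const_limsup hM]
      _ ≤ dP ((fun x => (M:ℤ) * x) '' S) :=
          le_csSup (bddAbove_pack _) ⟨_, pack_D M hM hA, rfl⟩

end Stmt17Aux

theorem stmt17 (l1 l2 m : ℤ) (h1 : 0 < l1) (h2 : 0 < l2) (hm : 0 < m)
    (hco : Int.gcd l1 l2 = 1) :
    dC ({0, m * l1, m * (l1 + l2)} : Set ℤ) = dC ({0, l1, l1 + l2} : Set ℤ) ∧
    dP ({0, m * l1, m * (l1 + l2)} : Set ℤ) = dP ({0, l1, l1 + l2} : Set ℤ) := by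
  set M : ℕ := m.toNat with hMdef
  have hM : 0 < M := by omega
  have hMm : ((M : ℕ) : ℤ) = m := Int.toNat_of_nonneg hm.le
  have himg : ({0, m * l1, m * (l1 + l2)} : Set ℤ)
      = (fun x => (M:ℤ) * x) '' ({0, l1, l1 + l2} : Set ℤ) := by
    rw [hMm]
    simp only [Set.image_insert_eq, Set.image_singleton, mul_zero]
  have h0 : (0:ℤ) ∈ ({0, l1, l1 + l2} : Set ℤ) := Set.mem_insert 0 _
  constructor
  · rw [himg]; exact Stmt17Aux.dC_eq M hM _ h0
  · rw [himg]; exact Stmt17Aux.dP_eq M hM _
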